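/- For every real number $\lambda > 0$ and every decomposition $\lambda = \mu + \nu$ with $\mu > 0$ and $\nu > -1$, and for all real numbers $R > 0$ and $m$ with $|m| \le R$, one has $\left(1 - \frac{m^2}{R^2}\right)^{\lambda} = c_{\lambda}\, R^{-2\lambda} \int_{|m|}^{R} (R^2 - t^2)^{\mu - 1}\, t^{2\nu + 1} \left(1 - \frac{m^2}{t^2}\right)^{\nu} dt$, where $c_{\lambda} = \frac{2\,\Gamma(\mu+\nu+1)}{\Gamma(\nu+1)\,\Gamma(\mu)}$. -/

import Mathlib

open MeasureTheory Set



lemma real_beta (p q : ℝ) (hp : 0 < p) (hq : 0 < q) :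
    ∫ x in (0:ℝ)..1, x ^ (p - 1) * (1 - x) ^ (q - 1)
      = Real.Gamma p * Real.Gamma q / Real.Gamma (p + q) := by
  have key := Complex.Gamma_mul_Gamma_eq_betaIntegral (s := (p:ℂ)) (t := (q:ℂ))
    (by simpa using hp) (by simpa using hq)
  rw [Complex.betaIntegral] at key
  have hcongr : (∫ x in (0:ℝ)..1, (x:ℂ) ^ ((p:ℂ) - 1) * ((1:ℂ) - x) ^ ((q:ℂ) - 1))
      = ((∫ x in (0:ℝ)..1, x ^ (p - 1) * (1 - x) ^ (q - 1) : ℝ) : ℂ) := by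
    rw [← intervalIntegral.integral_ofReal]
    refine intervalIntegral.integral_congr fun x hx => ?_
    rw [Set.uIcc_of_le (by norm_num : (0:ℝ) ≤ 1)] at hx
    push_cast
    rw [Complex.ofReal_cpow hx.1 (p-1), Complex.ofReal_cpow (by linarith [hx.2]) (q-1)]
    push_cast
    ring
  rw [hcongr, show ((p:ℂ) + q) = ((p+q : ℝ) : ℂ) by push_cast; ring,
    Complex.Gamma_ofReal, Complex.Gamma_ofReal, Complex.Gamma_ofReal] at key
  have h3 : Real.Gamma p * Real.Gamma q
      = Real.Gamma (p+q) * ∫ x in (0:ℝ)..1, x ^ (p - 1) * (1 - x) ^ (q - 1) := by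
    exact_mod_cast key
  have hG : Real.Gamma (p + q) ≠ 0 := (Real.Gamma_pos_of_pos (by linarith)).ne'
  field_simp
  linarith [h3]

lemma shifted_beta (a b p q : ℝ) (hab : a < b) (hp : 0 < p) (hq : 0 < q)
    (hbeta : ∫ x in (0:ℝ)..1, x ^ (p - 1) * (1 - x) ^ (q - 1)
      = Real.Gamma p * Real.Gamma q / Real.Gamma (p + q)) :
    ∫ u in a..b, (b - u) ^ (q - 1) * (u - a) ^ (p - 1)
      = (b - a) ^ (p + q - 1) * (Real.Gamma p * Real.Gamma q / Real.Gamma (p + q)) := by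
  have hba : (0:ℝ) < b - a := by linarith
  have hsub := intervalIntegral.integral_comp_mul_add
    (a := 0) (b := 1) (f := fun u => (b - u) ^ (q - 1) * (u - a) ^ (p - 1)) hba.ne' a
  simp only [mul_zero, zero_add, mul_one] at hsub
  rw [show b - a + a = b by ring] at hsub
  have hcongr : (∫ x in (0:ℝ)..1, (b - ((b-a) * x + a)) ^ (q - 1) * (((b-a) * x + a) - a) ^ (p - 1))
      = ∫ x in (0:ℝ)..1, ((b-a) ^ (q-1) * (b-a) ^ (p-1)) * (x ^ (p - 1) * (1 - x) ^ (q - 1)) := by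
    refine intervalIntegral.integral_congr fun x hx => ?_
    rw [Set.uIcc_of_le (by norm_num : (0:ℝ) ≤ 1)] at hx
    rw [show b - ((b-a) * x + a) = (b-a) * (1-x) by ring, show ((b-a) * x + a) - a = (b-a) * x by ring,
      Real.mul_rpow hba.le (by linarith [hx.2]), Real.mul_rpow hba.le hx.1]
    ring
  rw [hcongr, intervalIntegral.integral_const_mul, hbeta, smul_eq_mul] at hsub
  have hI : ∫ u in a..b, (b - u) ^ (q - 1) * (u - a) ^ (p - 1)
      = (b - a) * ((b-a) ^ (q-1) * (b-a) ^ (p-1) * (Real.Gamma p * Real.Gamma q / Real.Gamma (p + q))) := by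
    rw [hsub, ← mul_assoc, mul_inv_cancel₀ hba.ne', one_mul]
  rw [hI, show (b-a) ^ (p+q-1) = (b-a) ^ (1:ℝ) * ((b-a) ^ (q-1) * (b-a) ^ (p-1)) by
    rw [← Real.rpow_add hba, ← Real.rpow_add hba]; ring_nf, Real.rpow_one]
  ring

lemma sq_image_Ioo {a R : ℝ} (ha0 : 0 ≤ a) (haR : a < R) :
    (fun t : ℝ => t ^ 2) '' Set.Ioo a R = Set.Ioo (a ^ 2) (R ^ 2) := by
  ext u
  simp only [Set.mem_image, Set.mem_Ioo]
  constructor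
  · rintro ⟨t, ⟨hta, htR⟩, rfl⟩
    constructor <;> nlinarith
  · rintro ⟨h1, h2⟩
    have hu0 : 0 ≤ u := le_trans (sq_nonneg a) h1.le
    refine ⟨Real.sqrt u, ⟨?_, ?_⟩, Real.sq_sqrt hu0⟩
    · calc a = Real.sqrt (a ^ 2) := (Real.sqrt_sq ha0).symm
        _ < Real.sqrt u := Real.sqrt_lt_sqrt (sq_nonneg a) h1
    · calc Real.sqrt u < Real.sqrt (R ^ 2) := Real.sqrt_lt_sqrt hu0 h2
        _ = R := Real.sqrt_sq (ha0.trans haR.le)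

lemma sq_subst {a R : ℝ} (ha0 : 0 ≤ a) (haR : a < R) (g : ℝ → ℝ) :
    ∫ u in Set.Ioo (a ^ 2) (R ^ 2), g u = ∫ t in Set.Ioo a R, |2 * t| * g (t ^ 2) := by
  rw [← sq_image_Ioo ha0 haR]
  have := integral_image_eq_integral_abs_deriv_smul (f := fun t : ℝ => t ^ 2)
    (f' := fun t : ℝ => 2 * t) (s := Set.Ioo a R) measurableSet_Ioo
    (fun x _ => by simpa using (hasDerivAt_pow 2 x).hasDerivWithinAt)
    (fun x hx y hy h => by
      simp only at h
      rcases sq_eq_sq_iff_eq_or_eq_neg.mp h with h' | h'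
      · exact h'
      · have hx0 : 0 < x := lt_of_le_of_lt ha0 hx.1
        have hy0 : 0 ≤ y := ha0.trans hy.1.le
        linarith) g
  simpa using this


/-- Stein--Weiss subordination identity. -/
theorem stein_weiss_identity (lam mu nu R m : ℝ)
    (hlam : 0 < lam) (hdecomp : lam = mu + nu) (hmu : 0 < mu) (hnu : -1 < nu)
    (hR : 0 < R) (hm : |m| ≤ R) :
    (1 - m ^ 2 / R ^ 2) ^ lam =
      (2 * Real.Gamma (mu + nu + 1) / (Real.Gamma (nu + 1) * Real.Gamma mu)) *
        R ^ (-2 * lam) *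
        ∫ t in (|m|)..R,
          (R ^ 2 - t ^ 2) ^ (mu - 1) * t ^ (2 * nu + 1) * (1 - m ^ 2 / t ^ 2) ^ nu := by
  set a := |m| with ha_def
  have ha0 : 0 ≤ a := abs_nonneg m
  have ham : a ^ 2 = m ^ 2 := sq_abs m
  rcases eq_or_lt_of_le hm with heq | haR
  · -- |m| = R : both sides vanish
    have hm2 : m ^ 2 = R ^ 2 := by rw [← ham, heq]
    have h0 : (1 - m ^ 2 / R ^ 2) = 0 := by
      rw [hm2, div_self (by positivity)]; ring
    rw [h0, Real.zero_rpow hlam.ne', heq, intervalIntegral.integral_same, mul_zero]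
  · -- |m| < R
    set g : ℝ → ℝ := fun u => (R ^ 2 - u) ^ (mu - 1) * (u - m ^ 2) ^ nu with hg_def
    -- Step 1: rewrite the interval integral via the substitution t ↦ t²
    have step1 : (∫ t in a..R,
          (R ^ 2 - t ^ 2) ^ (mu - 1) * t ^ (2 * nu + 1) * (1 - m ^ 2 / t ^ 2) ^ nu)
        = (1/2) * ∫ u in (m ^ 2)..(R ^ 2), g u := by
      rw [intervalIntegral.integral_of_le haR.le, integral_Ioc_eq_integral_Ioo]
      have hpt : ∀ t ∈ Set.Ioo a R,
          (R ^ 2 - t ^ 2) ^ (mu - 1) * t ^ (2 * nu + 1) * (1 - m ^ 2 / t ^ 2) ^ nu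
            = (1/2) * (|2 * t| * g (t ^ 2)) := by
        intro t ht
        have ht0 : 0 < t := lt_of_le_of_lt ha0 ht.1
        have habs : |2 * t| = 2 * t := abs_of_pos (by linarith)
        have hm2t : m ^ 2 ≤ t ^ 2 := by nlinarith [ht.1, abs_nonneg m, sq_abs m]
        have hdiv : (1 - m ^ 2 / t ^ 2) = (t ^ 2 - m ^ 2) / t ^ 2 := by
          field_simp
        have h2 : ((t:ℝ) ^ 2) ^ nu = t ^ (2 * nu) := by
          rw [← Real.rpow_natCast t 2, ← Real.rpow_mul ht0.le]
          norm_num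
        have h3 : t ^ (2 * nu + 1) = t ^ (2 * nu) * t := Real.rpow_add_one ht0.ne' _
        have htν : (0:ℝ) < t ^ (2 * nu) := Real.rpow_pos_of_pos ht0 _
        rw [hdiv, Real.div_rpow (by linarith) (sq_nonneg t), h2, h3, habs]
        simp only [hg_def]
        field_simp
      rw [setIntegral_congr_fun measurableSet_Ioo hpt, integral_const_mul, ← ham,
        ← sq_subst ha0 haR g, ham, ← integral_Ioc_eq_integral_Ioo,
        ← intervalIntegral.integral_of_le (by nlinarith : m ^ 2 ≤ R ^ 2)]
    -- Step 2: evaluate the beta-type integral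
    have hm2R2 : m ^ 2 < R ^ 2 := by rw [← ham]; nlinarith
    have hbeta := real_beta (nu + 1) mu (by linarith) hmu
    have step2 := shifted_beta (m ^ 2) (R ^ 2) (nu + 1) mu hm2R2 (by linarith) hmu hbeta
    have hgexp : (∫ u in (m ^ 2)..(R ^ 2), g u)
        = (R ^ 2 - m ^ 2) ^ (mu + nu) * (Real.Gamma (nu + 1) * Real.Gamma mu / Real.Gamma (nu + 1 + mu)) := by
      rw [show (∫ u in (m ^ 2)..(R ^ 2), g u)
          = ∫ u in (m ^ 2)..(R ^ 2), (R ^ 2 - u) ^ (mu - 1) * (u - m ^ 2) ^ ((nu + 1) - 1) by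
        simp [hg_def], step2, show nu + 1 + mu - 1 = mu + nu by ring]
    rw [step1, hgexp]
    -- Step 3: algebra with Gammas and powers
    have hRm : (0:ℝ) < R ^ 2 - m ^ 2 := by linarith
    have hGnu : (0:ℝ) < Real.Gamma (nu + 1) := Real.Gamma_pos_of_pos (by linarith)
    have hGmu : (0:ℝ) < Real.Gamma mu := Real.Gamma_pos_of_pos hmu
    have hGsum : Real.Gamma (mu + nu + 1) = Real.Gamma (nu + 1 + mu) := by ring_nf
    have hpow : R ^ (-2 * lam) = ((R:ℝ) ^ 2) ^ (-lam) := by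
      rw [← Real.rpow_natCast R 2, ← Real.rpow_mul hR.le]
      norm_num
    have hLHS : (1 - m ^ 2 / R ^ 2) ^ lam
        = (R ^ 2 - m ^ 2) ^ lam * ((R:ℝ) ^ 2) ^ (-lam) := by
      rw [show (1 - m ^ 2 / R ^ 2) = (R ^ 2 - m ^ 2) / R ^ 2 by field_simp,
        Real.div_rpow hRm.le (sq_nonneg R), Real.rpow_neg (sq_nonneg R), div_eq_mul_inv]
    rw [hLHS, hpow, hGsum, hdecomp]
    have hGne : Real.Gamma (nu + 1 + mu) ≠ 0 :=
      (Real.Gamma_pos_of_pos (by linarith)).ne'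
    field_simp
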